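/- Let Q be a 3×3 symmetric positive definite matrix with entries q11, q22, q33 > 0 on the diagonal, off-diagonal entries q12 > 0, −q13 < 0, −q23 < 0 (i.e., sign pattern [[+,+,−],[+,+,−],[−,−,+]]) and satisfying q11 q23 > q12 q13, q22 q13 > q12 q23, q33 q12 > q13 q23. Define f(a,b,c) = q11 a + q22 b + q33 c − 2 q12 √(ab) − 2 q13 √(ac) + 2 q23 √(bc), and let s = q22 q13² + q33 q12² − 2 q12 q13 q23. Then for all a ≥ 0, b ≥ q13²/s, c ≥ q12²/s, we have f(a,b,c) > 1. -/

import Mathlib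

set_option maxHeartbeats 1000000 in
/-- For a positive definite matrix with sign pattern `[[+,+,−],[+,+,−],[−,−,+]]`
satisfying `q₁₁ q₂₃ > q₁₂ q₁₃`, `q₂₂ q₁₃ > q₁₂ q₂₃`, `q₃₃ q₁₂ > q₁₃ q₂₃`, the form
`f(a,b,c) = q₁₁ a + q₂₂ b + q₃₃ c − 2 q₁₂ √(ab) − 2 q₁₃ √(ac) + 2 q₂₃ √(bc)`
exceeds `1` on the region `a ≥ 0`, `b ≥ q₁₃²/s`, `c ≥ q₁₂²/s`, where
`s = q₂₂ q₁₃² + q₃₃ q₁₂² − 2 q₁₂ q₁₃ q₂₃`. -/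
theorem stmt_16 (q11 q22 q33 q12 q13 q23 s : ℝ)
    (h11 : 0 < q11) (h22 : 0 < q22) (h33 : 0 < q33)
    (h12 : 0 < q12) (h13 : 0 < q13) (h23 : 0 < q23)
    (hQ : (!![q11, q12, -q13; q12, q22, -q23; -q13, -q23, q33]).PosDef)
    (hd1 : q11 * q23 > q12 * q13) (hd2 : q22 * q13 > q12 * q23)
    (hd3 : q33 * q12 > q13 * q23)
    (hs : s = q22 * q13 ^ 2 + q33 * q12 ^ 2 - 2 * q12 * q13 * q23)
    (a b c : ℝ) (ha : 0 ≤ a) (hb : q13 ^ 2 / s ≤ b) (hc : q12 ^ 2 / s ≤ c) :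
    1 < q11 * a + q22 * b + q33 * c - 2 * q12 * Real.sqrt (a * b)
        - 2 * q13 * Real.sqrt (a * c) + 2 * q23 * Real.sqrt (b * c) := by

  -- positivity of s
  have hss : 0 < s := by nlinarith
  -- leading minors
  have hA : 0 < q11 * q22 - q12 ^ 2 := by
    have h := hQ.dotProduct_mulVec_pos (x := ![q12, -q11, 0]) (by simp [ne_eq, funext_iff, Fin.forall_fin_succ, h11.ne'])
    simp [Matrix.mulVec, dotProduct, Fin.sum_univ_three] at h
    nlinarith [h]
  have hB : 0 < q11 * q33 - q13 ^ 2 := by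
    have h := hQ.dotProduct_mulVec_pos (x := ![q13, 0, q11]) (by simp [ne_eq, funext_iff, Fin.forall_fin_succ, h11.ne'])
    simp [Matrix.mulVec, dotProduct, Fin.sum_univ_three] at h
    nlinarith [h]
  -- set up square roots
  have hb0 : 0 ≤ b := le_trans (by positivity) hb
  have hc0 : 0 ≤ c := le_trans (by positivity) hc
  set x := Real.sqrt a with hxdef
  set y := Real.sqrt b with hydef
  set z := Real.sqrt c with hzdef
  have hx0 : 0 ≤ x := Real.sqrt_nonneg a
  have hy0 : 0 ≤ y := Real.sqrt_nonneg b
  have hz0 : 0 ≤ z := Real.sqrt_nonneg c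
  have hxa : x ^ 2 = a := Real.sq_sqrt ha
  have hyb : y ^ 2 = b := Real.sq_sqrt hb0
  have hzc : z ^ 2 = c := Real.sq_sqrt hc0
  have hab : Real.sqrt (a * b) = x * y := Real.sqrt_mul ha b
  have hac : Real.sqrt (a * c) = x * z := Real.sqrt_mul ha c
  have hbc : Real.sqrt (b * c) = y * z := Real.sqrt_mul hb0 c
  rw [hab, hac, hbc, ← hxa, ← hyb, ← hzc]
  -- bounds on y², z², yz
  have hy2 : q13 ^ 2 ≤ s * y ^ 2 := by
    rw [hyb]; calc q13 ^ 2 = s * (q13 ^ 2 / s) := by field_simp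
    _ ≤ s * b := by apply mul_le_mul_of_nonneg_left hb hss.le
  have hz2 : q12 ^ 2 ≤ s * z ^ 2 := by
    rw [hzc]; calc q12 ^ 2 = s * (q12 ^ 2 / s) := by field_simp
    _ ≤ s * c := by apply mul_le_mul_of_nonneg_left hc hss.le
  have hyz : q12 * q13 ≤ s * (y * z) := by
    nlinarith [mul_nonneg (mul_nonneg hss.le hy0) hz0,
      mul_le_mul hy2 hz2 (by positivity) (by nlinarith)]
  -- main inequality
  rw [show (1:ℝ) < q11 * x ^ 2 + q22 * y ^ 2 + q33 * z ^ 2 - 2 * q12 * (x * y)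
      - 2 * q13 * (x * z) + 2 * q23 * (y * z) ↔
      q11 * s * 1 < q11 * s * (q11 * x ^ 2 + q22 * y ^ 2 + q33 * z ^ 2 - 2 * q12 * (x * y)
      - 2 * q13 * (x * z) + 2 * q23 * (y * z)) from
    (mul_lt_mul_iff_right₀ (by positivity)).symm]
  have hC : (0:ℝ) < q11 * q23 - q12 * q13 := by linarith
  have hkey : (q11 * q22 - q12 ^ 2) * q13 ^ 2 + (q11 * q33 - q13 ^ 2) * q12 ^ 2
      + 2 * (q11 * q23 - q12 * q13) * (q12 * q13)
      = q11 * s + 4 * (q12 * q13) * (q11 * q23 - q12 * q13) := by rw [hs]; ring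
  nlinarith [mul_nonneg hss.le (sq_nonneg (q11 * x - q12 * y - q13 * z)),
    mul_le_mul_of_nonneg_left hy2 hA.le,
    mul_le_mul_of_nonneg_left hz2 hB.le,
    mul_le_mul_of_nonneg_left hyz hC.le,
    mul_pos (mul_pos h12 h13) hC, hkey]
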